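/- Let p ∈ [1,∞), let ρ : ℝ^N → ℝ be continuous and strictly positive with ∫_{ℝ^N} ρ(x) dx = 1, and let β > 0. Let J be nonnegative, measurable, supported in the closed unit ball with ∫ J = 1; let g : ℝ → ℝ be measurable with |g(s)| ≤ a for all s; let h : ℝ×ℝ → ℝ be any function. If u : [τ,∞) → L^p(ℝ^N,ρ) satisfies, for every t ≥ τ, u(t,x) = e^{−(t−τ)} u_τ(x) + ∫_τ^t e^{−(t−s)} g(β(J*u)(s,x) + β h(s,u(s,x))) ds, then for every t ≥ τ, ‖u(t)‖_{L^p(ℝ^N,ρ)} ≤ e^{−(t−τ)} ‖u_τ‖_{L^p(ℝ^N,ρ)} + a(1 − e^{−(t−τ)}). -/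

import Mathlib

open MeasureTheory Set
open scoped ENNReal

noncomputable section

abbrev Euc (N : ℕ) := EuclideanSpace ℝ (Fin N)

/-- Weighted `L^p` norm `(∫ ρ |u|^p)^{1/p}`. -/
def wnorm {N : ℕ} (p : ℝ) (ρ u : Euc N → ℝ) : ℝ :=
  (∫ x, ρ x * |u x| ^ p) ^ (1 / p)

/-- Convolution `(J*u)(x) = ∫ J(x-y) u(y) dy`. -/
def conv {N : ℕ} (J u : Euc N → ℝ) (x : Euc N) : ℝ :=
  ∫ y, J (x - y) * u y

/-- Membership in the weighted Lebesgue space `L^p(ℝ^N, ρ)`. -/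
def MemWLp {N : ℕ} (p : ℝ) (ρ u : Euc N → ℝ) : Prop :=
  AEStronglyMeasurable u volume ∧ Integrable fun x => ρ x * |u x| ^ p

/-- `u` satisfies the variation-of-constants identity on `[τ, ∞)` with initial datum `uτ`. -/
def IsSolution {N : ℕ} (J : Euc N → ℝ) (g : ℝ → ℝ) (h : ℝ → ℝ → ℝ) (β τ : ℝ)
    (uτ : Euc N → ℝ) (u : ℝ → Euc N → ℝ) : Prop :=
  ∀ t ≥ τ, ∀ x, u t x = Real.exp (-(t - τ)) * uτ x +
    ∫ s in τ..t, Real.exp (-(t - s)) * g (β * conv J (u s) x + β * h s (u s x))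

set_option maxHeartbeats 1000000 in
theorem stmt7 {N : ℕ} (p : ℝ) (hp : 1 ≤ p)
    (ρ : Euc N → ℝ) (hρc : Continuous ρ) (hρpos : ∀ x, 0 < ρ x) (hρ1 : ∫ x, ρ x = 1)
    (β : ℝ) (hβ : 0 < β)
    (J : Euc N → ℝ) (hJnn : ∀ x, 0 ≤ J x) (hJm : Measurable J)
    (hJsupp : ∀ x : Euc N, 1 < ‖x‖ → J x = 0) (hJ1 : ∫ x, J x = 1)
    (g : ℝ → ℝ) (hgm : Measurable g) (a : ℝ) (hga : ∀ s, |g s| ≤ a)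
    (h : ℝ → ℝ → ℝ)
    (τ : ℝ) (uτ : Euc N → ℝ) (huτ : MemWLp p ρ uτ)
    (u : ℝ → Euc N → ℝ) (hsol : IsSolution J g h β τ uτ u) :
    ∀ t ≥ τ, wnorm p ρ (u t) ≤
      Real.exp (-(t - τ)) * wnorm p ρ uτ + a * (1 - Real.exp (-(t - τ))) := by
  intro t ht
  have hp0 : (0:ℝ) < p := lt_of_lt_of_le one_pos hp
  have hp0' : p ≠ 0 := hp0.ne'
  set c : ℝ := Real.exp (-(t - τ)) with hc
  have hc0 : 0 < c := Real.exp_pos _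
  have hc1 : c ≤ 1 := Real.exp_le_one_iff.mpr (by linarith)
  have ha : 0 ≤ a := (abs_nonneg (g 0)).trans (hga 0)
  set b : ℝ := a * (1 - c) with hb
  have hb0 : 0 ≤ b := mul_nonneg ha (by linarith)
  -- pointwise bound
  have key : ∀ x, |u t x| ≤ c * |uτ x| + b := by
    intro x
    rw [hsol t ht x]
    refine (abs_add_le _ _).trans (add_le_add ?_ ?_)
    · rw [abs_mul, abs_of_pos hc0]
    · have hbd : ‖∫ s in τ..t, Real.exp (-(t - s)) *
          g (β * conv J (u s) x + β * h s (u s x))‖ ≤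
          |∫ s in τ..t, a * Real.exp (-(t - s))| := by
        apply intervalIntegral.norm_integral_le_abs_of_norm_le
        · filter_upwards with s
          rw [Real.norm_eq_abs, abs_mul, abs_of_pos (Real.exp_pos _), mul_comm]
          exact mul_le_mul_of_nonneg_right (hga _) (Real.exp_pos _).le
        · exact (Continuous.intervalIntegrable (continuous_const.mul (Real.continuous_exp.comp (by fun_prop))) _ _)
      have hval : (∫ s in τ..t, a * Real.exp (-(t - s))) = b := by
        have h1 : ∀ s : ℝ, a * Real.exp (-(t - s)) = a * (Real.exp s / Real.exp t) := by
          intro s; rw [neg_sub, Real.exp_sub]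
        simp_rw [h1]
        rw [intervalIntegral.integral_const_mul, intervalIntegral.integral_div,
          integral_exp, hb, hc, neg_sub, Real.exp_sub, sub_div,
          div_self (Real.exp_ne_zero t)]
      rw [hval] at hbd
      calc |∫ s in τ..t, Real.exp (-(t - s)) *
            g (β * conv J (u s) x + β * h s (u s x))| ≤ |b| := hbd
        _ = b := abs_of_nonneg hb0
  -- basic integrability facts
  have hρint : Integrable ρ := by
    by_contra hcon
    rw [MeasureTheory.integral_undef hcon] at hρ1
    norm_num at hρ1
  have huτm := huτ.1
  have huτint := huτ.2
  have hwτ0 : 0 ≤ wnorm p ρ uτ := by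
    apply Real.rpow_nonneg
    apply integral_nonneg
    intro x
    exact mul_nonneg (hρpos x).le (Real.rpow_nonneg (abs_nonneg _) p)
  have hRHS0 : 0 ≤ c * wnorm p ρ uτ + b := by positivity
  by_cases hint : Integrable (fun x => ρ x * |u t x| ^ p) volume
  case neg =>
    unfold wnorm
    rw [MeasureTheory.integral_undef hint, Real.zero_rpow (by positivity)]
    exact hRHS0
  -- main case: Minkowski in ℝ≥0∞
  set R : Euc N → ℝ≥0∞ := fun x => ENNReal.ofReal (ρ x) with hR
  have hRm : Measurable R := ENNReal.measurable_ofReal.comp hρc.measurable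
  have hRint : (∫⁻ x, R x) = 1 := by
    rw [← MeasureTheory.ofReal_integral_eq_lintegral_ofReal hρint
      (Filter.Eventually.of_forall fun x => (hρpos x).le), hρ1, ENNReal.ofReal_one]
  set F1 : Euc N → ℝ≥0∞ := fun x => R x ^ (1/p) * ENNReal.ofReal (c * |uτ x|) with hF1
  set F2 : Euc N → ℝ≥0∞ := fun x => R x ^ (1/p) * ENNReal.ofReal b with hF2
  have hF1m : AEMeasurable F1 volume := by
    exact ((hRm.pow_const _).aemeasurable.mul
      (ENNReal.measurable_ofReal.comp_aemeasurable
        (((continuous_abs.measurable.comp_aemeasurable huτm.aemeasurable)).const_mul c)))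
  have hF2m : AEMeasurable F2 volume := ((hRm.pow_const _).mul measurable_const).aemeasurable
  have hRpow : ∀ x, (R x ^ (1/p)) ^ p = R x := by
    intro x
    rw [← ENNReal.rpow_mul, one_div, inv_mul_cancel₀ hp0', ENNReal.rpow_one]
  have hmain : ENNReal.ofReal (wnorm p ρ (u t)) ≤
      ENNReal.ofReal (c * wnorm p ρ uτ + b) := by
    have hI0 : 0 ≤ ∫ x, ρ x * |u t x| ^ p := by
      apply integral_nonneg
      intro x
      exact mul_nonneg (hρpos x).le (Real.rpow_nonneg (abs_nonneg _) p)
    have step0 : ENNReal.ofReal (wnorm p ρ (u t)) =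
        (∫⁻ x, (R x ^ (1/p) * ENNReal.ofReal (|u t x|)) ^ p) ^ (1/p) := by
      unfold wnorm
      rw [← ENNReal.ofReal_rpow_of_nonneg hI0 (by positivity)]
      congr 1
      rw [MeasureTheory.ofReal_integral_eq_lintegral_ofReal hint
        (Filter.Eventually.of_forall fun x =>
          mul_nonneg (hρpos x).le (Real.rpow_nonneg (abs_nonneg _) p))]
      apply lintegral_congr
      intro x
      rw [ENNReal.mul_rpow_of_nonneg _ _ hp0.le, hRpow x,
        ENNReal.ofReal_mul (hρpos x).le,
        ENNReal.ofReal_rpow_of_nonneg (abs_nonneg _) hp0.le]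
    have step1 : (∫⁻ x, (R x ^ (1/p) * ENNReal.ofReal (|u t x|)) ^ p) ^ (1/p) ≤
        (∫⁻ x, (F1 + F2) x ^ p) ^ (1/p) := by
      apply ENNReal.rpow_le_rpow _ (by positivity)
      apply lintegral_mono
      intro x
      apply ENNReal.rpow_le_rpow _ hp0.le
      have : ENNReal.ofReal (|u t x|) ≤
          ENNReal.ofReal (c * |uτ x|) + ENNReal.ofReal b := by
        rw [← ENNReal.ofReal_add (mul_nonneg hc0.le (abs_nonneg _)) hb0]
        exact ENNReal.ofReal_le_ofReal (key x)
      calc R x ^ (1/p) * ENNReal.ofReal (|u t x|) ≤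
          R x ^ (1/p) * (ENNReal.ofReal (c * |uτ x|) + ENNReal.ofReal b) :=
            mul_le_mul_right this _
        _ = (F1 + F2) x := by simp [hF1, hF2, mul_add]
    have step2 : (∫⁻ x, (F1 + F2) x ^ p) ^ (1/p) ≤
        (∫⁻ x, F1 x ^ p) ^ (1/p) + (∫⁻ x, F2 x ^ p) ^ (1/p) :=
      ENNReal.lintegral_Lp_add_le hF1m hF2m hp
    have hT1 : (∫⁻ x, F1 x ^ p) ^ (1/p) = ENNReal.ofReal (c * wnorm p ρ uτ) := by
      have e1 : ∀ x, F1 x ^ p = ENNReal.ofReal (c ^ p) *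
          ENNReal.ofReal (ρ x * |uτ x| ^ p) := by
        intro x
        simp only [hF1, hR]
        rw [ENNReal.mul_rpow_of_nonneg _ _ hp0.le, ← ENNReal.rpow_mul,
          one_div, inv_mul_cancel₀ hp0', ENNReal.rpow_one,
          ENNReal.ofReal_mul hc0.le,
          ENNReal.mul_rpow_of_nonneg _ _ hp0.le,
          ENNReal.ofReal_rpow_of_nonneg hc0.le hp0.le,
          ENNReal.ofReal_mul (hρpos x).le,
          ENNReal.ofReal_rpow_of_nonneg (abs_nonneg _) hp0.le]
        ring
      have hLuτ : (∫⁻ x, ENNReal.ofReal (ρ x * |uτ x| ^ p)) =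
          ENNReal.ofReal (∫ x, ρ x * |uτ x| ^ p) :=
        (MeasureTheory.ofReal_integral_eq_lintegral_ofReal huτint
          (Filter.Eventually.of_forall fun x =>
            mul_nonneg (hρpos x).le (Real.rpow_nonneg (abs_nonneg _) p))).symm
      simp_rw [e1]
      have hIτ0 : 0 ≤ ∫ x, ρ x * |uτ x| ^ p := by
        apply integral_nonneg
        intro x
        exact mul_nonneg (hρpos x).le (Real.rpow_nonneg (abs_nonneg _) p)
      rw [lintegral_const_mul' _ _ ENNReal.ofReal_ne_top, hLuτ,
        ENNReal.mul_rpow_of_nonneg _ _ (by positivity),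
        ENNReal.ofReal_rpow_of_nonneg (Real.rpow_nonneg hc0.le p) (by positivity),
        ← Real.rpow_mul hc0.le, mul_one_div_cancel hp0', Real.rpow_one,
        ENNReal.ofReal_rpow_of_nonneg hIτ0 (by positivity),
        ← ENNReal.ofReal_mul hc0.le]
      rfl
    have hT2 : (∫⁻ x, F2 x ^ p) ^ (1/p) = ENNReal.ofReal b := by
      have e2 : ∀ x, F2 x ^ p = ENNReal.ofReal b ^ p * R x := by
        intro x
        simp only [hF2]
        rw [ENNReal.mul_rpow_of_nonneg _ _ hp0.le, hRpow x]
        ring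
      simp_rw [e2]
      rw [lintegral_const_mul' _ _ (by
          exact ENNReal.rpow_ne_top_of_nonneg hp0.le ENNReal.ofReal_ne_top),
        hRint, mul_one, ← ENNReal.rpow_mul, mul_one_div_cancel hp0',
        ENNReal.rpow_one]
    calc ENNReal.ofReal (wnorm p ρ (u t))
        = (∫⁻ x, (R x ^ (1/p) * ENNReal.ofReal (|u t x|)) ^ p) ^ (1/p) := step0
      _ ≤ (∫⁻ x, (F1 + F2) x ^ p) ^ (1/p) := step1
      _ ≤ (∫⁻ x, F1 x ^ p) ^ (1/p) + (∫⁻ x, F2 x ^ p) ^ (1/p) := step2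
      _ = ENNReal.ofReal (c * wnorm p ρ uτ) + ENNReal.ofReal b := by rw [hT1, hT2]
      _ = ENNReal.ofReal (c * wnorm p ρ uτ + b) :=
          (ENNReal.ofReal_add (by positivity) hb0).symm
  rw [← ENNReal.ofReal_le_ofReal_iff hRHS0]
  exact hmain
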